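/- Let Δ₁, Δ₂ ∈ ℝ and let G : ℝ × (ℝ³ ∖ {0}) → ℝ be a smooth function of (t₁₂, x₁₂) (i.e., the translation-invariant form of a two-point function) satisfying, for all t₁, t₂ ∈ ℝ and all x₁ ≠ x₂ in ℝ³: (i) the boost Ward identities x₁^i ∂_{t₁} G + x₂^i ∂_{t₂} G = 0 for i = 1,2,3, where G is evaluated at (t₁−t₂, x₁−x₂); (ii) the temporal SCT Ward identity −|x₁|² ∂_{t₁} G − |x₂|² ∂_{t₂} G = 0; and (iii) the dilatation Ward identity (t₁₂ ∂_{t₁₂} + x₁₂·∂_{x₁₂} + Δ₁ + Δ₂) G = 0. If additionally G is rotation invariant (G depends on x₁₂ only through |x₁₂|), then there is a constant c such that G(t, x) = c |x|^{−(Δ₁+Δ₂)} for all t ∈ ℝ, x ≠ 0; in particular G is independent of t. -/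

import Mathlib

/-- The Carrollian conformal Ward identities fix the (power-law branch of the)
    two-point function of scalar singlet primaries in 4d CCFT:
    any smooth, rotation-invariant G(t₁₂, x₁₂) satisfying the boost, temporal-SCT
    and dilatation Ward identities equals c·|x₁₂|^{−(Δ₁+Δ₂)}, independent of time. -/
theorem ccft4_singlet_two_point (Δ₁ Δ₂ : ℝ) (G : ℝ → (Fin 3 → ℝ) → ℝ)
    (hsm : ContDiffOn ℝ (⊤ : ℕ∞) (fun p : ℝ × (Fin 3 → ℝ) => G p.1 p.2) {p | p.2 ≠ 0})
    (hB : ∀ (i : Fin 3) (t₁ t₂ : ℝ) (x₁ x₂ : Fin 3 → ℝ), x₁ ≠ x₂ →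
      x₁ i * deriv (fun s => G (s - t₂) (x₁ - x₂)) t₁
        + x₂ i * deriv (fun s => G (t₁ - s) (x₁ - x₂)) t₂ = 0)
    (hK0 : ∀ (t₁ t₂ : ℝ) (x₁ x₂ : Fin 3 → ℝ), x₁ ≠ x₂ →
      -(∑ i, x₁ i * x₁ i) * deriv (fun s => G (s - t₂) (x₁ - x₂)) t₁
        - (∑ i, x₂ i * x₂ i) * deriv (fun s => G (t₁ - s) (x₁ - x₂)) t₂ = 0)
    (hD : ∀ (t : ℝ) (x : Fin 3 → ℝ), x ≠ 0 →
      t * deriv (fun s => G s x) t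
        + (∑ i, x i * deriv (fun s => G t (Function.update x i s)) (x i))
        + (Δ₁ + Δ₂) * G t x = 0)
    (hrot : ∀ (t : ℝ) (x y : Fin 3 → ℝ),
      (∑ i, x i * x i) = (∑ i, y i * y i) → G t x = G t y) :
    ∃ c : ℝ, ∀ (t : ℝ) (x : Fin 3 → ℝ), x ≠ 0 →
      G t x = c * Real.sqrt (∑ i, x i * x i) ^ (-(Δ₁ + Δ₂)) := by
  set Δ : ℝ := Δ₁ + Δ₂ with hΔ
  have hopen : IsOpen {p : ℝ × (Fin 3 → ℝ) | p.2 ≠ 0} :=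
    isOpen_compl_singleton.preimage continuous_snd
  -- differentiability of t ↦ G t x for x ≠ 0
  have hdiff : ∀ (t : ℝ) (x : Fin 3 → ℝ), x ≠ 0 → DifferentiableAt ℝ (fun s => G s x) t := by
    intro t x hx
    have hF : DifferentiableAt ℝ (fun p : ℝ × (Fin 3 → ℝ) => G p.1 p.2) (t, x) :=
      ((hsm.contDiffAt (hopen.mem_nhds hx)).differentiableAt (by simp))
    exact hF.comp t (show DifferentiableAt ℝ (fun s : ℝ => (s, x)) t by fun_prop)
  -- time derivative vanishes
  have hderiv0 : ∀ (t : ℝ) (x : Fin 3 → ℝ), x ≠ 0 → deriv (fun s => G s x) t = 0 := by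
    intro t x hx
    obtain ⟨i, hi⟩ := Function.ne_iff.mp hx
    have := hB i t 0 x 0 hx
    simp only [sub_zero, Pi.zero_apply, zero_mul, add_zero] at this
    exact (mul_eq_zero.mp this).resolve_left hi
  -- G independent of time
  have htime : ∀ (t : ℝ) (x : Fin 3 → ℝ), x ≠ 0 → G t x = G 0 x := by
    intro t x hx
    exact is_const_of_deriv_eq_zero (fun s => hdiff s x hx) (fun s => hderiv0 s x hx) t 0
  -- radial profile
  set e : Fin 3 → ℝ := fun j => if j = 0 then 1 else 0 with he
  set h : ℝ → ℝ := fun r => G 0 (r • e) with hh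
  have hre : ∀ r : ℝ, r • e = fun j => if j = 0 then r else 0 := by
    intro r; funext j
    by_cases hj : j = 0 <;> simp [he, hj]
  have hsum : ∀ r : ℝ, (∑ i, (r • e) i * (r • e) i) = r * r := by
    intro r
    rw [hre r, Fin.sum_univ_three]
    norm_num [Fin.ext_iff]
  have hne : ∀ r : ℝ, r ≠ 0 → r • e ≠ 0 := by
    intro r hr h0
    have hs := hsum r
    rw [h0] at hs
    simp at hs
    exact hr (by nlinarith [hs])
  -- G in terms of h
  have hGh : ∀ (t : ℝ) (x : Fin 3 → ℝ), x ≠ 0 →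
      G t x = h (Real.sqrt (∑ i, x i * x i)) := by
    intro t x hx
    have hS : (0:ℝ) ≤ ∑ i, x i * x i :=
      Finset.sum_nonneg fun i _ => mul_self_nonneg _
    have : G t x = G 0 x := htime t x hx
    rw [this]
    refine hrot 0 x _ ?_
    rw [hsum, Real.mul_self_sqrt hS]
  -- differentiability of h away from 0
  have hdiffh : ∀ r : ℝ, r ≠ 0 → DifferentiableAt ℝ h r := by
    intro r hr
    have hF : DifferentiableAt ℝ (fun p : ℝ × (Fin 3 → ℝ) => G p.1 p.2) (0, r • e) :=
      ((hsm.contDiffAt (hopen.mem_nhds (hne r hr))).differentiableAt (by simp))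
    have hc := hF.comp r (show DifferentiableAt ℝ (fun s : ℝ => ((0:ℝ), s • e)) r by fun_prop)
    exact hc
  -- ODE from dilatation Ward identity
  have hODE : ∀ r : ℝ, 0 < r → r * deriv h r + Δ * h r = 0 := by
    intro r hr
    have hD' := hD 0 (r • e) (hne r hr.ne')
    have hupd : ∀ s : ℝ, Function.update (r • e) 0 s = s • e := by
      intro s
      funext j
      rw [Function.update_apply, hre r, hre s]
      by_cases hj : j = 0 <;> simp [hj]
    have hfun : (fun s => G 0 (Function.update (r • e) 0 s)) = h := by
      funext s; rw [hupd s]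
    rw [Fin.sum_univ_three] at hD'
    have h1 : (r • e) 1 = 0 := by rw [hre r]; exact if_neg (by decide)
    have h2 : (r • e) 2 = 0 := by rw [hre r]; exact if_neg (by decide)
    have h0 : (r • e) 0 = r := by rw [hre r]; exact if_pos rfl
    rw [h0, h1, h2, hfun, zero_mul, zero_mul, zero_mul, add_zero, add_zero, zero_add] at hD'
    calc r * deriv h r + Δ * h r
        = r * deriv h r + Δ * G 0 (r • e) := by rw [hh]
      _ = 0 := hD'
  -- F r := h r * r ^ Δ has zero derivative on (0, ∞)
  set F : ℝ → ℝ := fun r => h r * r ^ Δ with hF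
  have hFderiv : ∀ r : ℝ, 0 < r → HasDerivAt F 0 r := by
    intro r hr
    have h1 : HasDerivAt h (deriv h r) r := (hdiffh r hr.ne').hasDerivAt
    have h2 : HasDerivAt (fun s : ℝ => s ^ Δ) (Δ * r ^ (Δ - 1)) r :=
      Real.hasDerivAt_rpow_const (Or.inl hr.ne')
    have h3 := h1.mul h2
    have hkey : deriv h r * r ^ Δ + h r * (Δ * r ^ (Δ - 1)) = 0 := by
      have hpow : r ^ Δ = r ^ (Δ - 1) * r := by
        rw [← Real.rpow_add_one hr.ne' (Δ - 1), sub_add_cancel]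
      rw [hpow]
      have := hODE r hr
      linear_combination (r ^ (Δ - 1)) * this
    rwa [hkey] at h3
  -- F is constant on (0, ∞)
  have hFconst : ∀ r : ℝ, 0 < r → F r = F 1 := by
    intro r hr
    refine (convex_Ioi (0:ℝ)).is_const_of_fderivWithin_eq_zero
      (fun s hs => ((hFderiv s hs).differentiableAt).differentiableWithinAt)
      (fun s hs => ?_) hr (by norm_num)
    rw [fderivWithin_of_isOpen isOpen_Ioi hs, (hFderiv s hs).hasFDerivAt.fderiv]
    apply ContinuousLinearMap.ext
    intro v
    simp
  refine ⟨h 1, ?_⟩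
  intro t x hx
  obtain ⟨i, hi⟩ := Function.ne_iff.mp hx
  have hSpos : (0:ℝ) < ∑ j, x j * x j :=
    Finset.sum_pos' (fun j _ => mul_self_nonneg _)
      ⟨i, Finset.mem_univ i, mul_self_pos.mpr hi⟩
  set R : ℝ := Real.sqrt (∑ j, x j * x j) with hR
  have hRpos : 0 < R := Real.sqrt_pos.mpr hSpos
  have hc := hFconst R hRpos
  rw [hF] at hc
  simp only [Real.one_rpow, mul_one] at hc
  have hval : h R = h 1 * R ^ (-Δ) := by
    have hRΔ : R ^ Δ ≠ 0 := (Real.rpow_pos_of_pos hRpos Δ).ne'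
    rw [← hc, Real.rpow_neg hRpos.le, mul_assoc, mul_inv_cancel₀ hRΔ, mul_one]
  rw [hGh t x hx, ← hR, hval]
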